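/- Let a be a real number with a ≥ 0. For any composition k = (k_1,...,k_r), complex numbers x_1,...,x_r in the closed unit disk, and integers l ≥ 0, n ≥ 1, Σ_{n ≥ n_1 ≥ ... ≥ n_r > 0} Π_{j=1}^r x_j^{n_j+l+a}/(n_j+l+a)^{k_j} = (-1)^r Σ_{j=0}^r (-1)^j ζ_{n+l}^⋆(k_1,...,k_j; x_1,...,x_j; a) · ζ_l(k_r,...,k_{j+1}; x_r,...,x_{j+1}; a). -/

import Mathlib

open Finset

/-- Parametric multiple harmonic sum
`ζ_m(k;x;a) = Σ_{m ≥ n_1 > ... > n_r ≥ 1} Π x_j^{n_j+a}/(n_j+a)^{k_j}` (principal branch powers). -/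
noncomputable def pmhs (a : ℂ) : ℕ → List (ℕ × ℂ) → ℂ
  | _, [] => 1
  | n, (k, x) :: rest =>
      ∑ m ∈ Finset.Icc 1 n, x ^ ((m : ℂ) + a) / ((m : ℂ) + a) ^ k * pmhs a (m - 1) rest

/-- Parametric multiple harmonic star sum `ζ_m^⋆(k;x;a)`. -/
noncomputable def pmhss (a : ℂ) : ℕ → List (ℕ × ℂ) → ℂ
  | _, [] => 1
  | n, (k, x) :: rest =>
      ∑ m ∈ Finset.Icc 1 n, x ^ ((m : ℂ) + a) / ((m : ℂ) + a) ^ k * pmhss a m rest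

namespace Stmt5Aux

noncomputable def term (a : ℂ) (k : ℕ) (x : ℂ) (m : ℕ) : ℂ :=
  x ^ ((m : ℂ) + a) / ((m : ℂ) + a) ^ k

lemma pmhs_nil (a : ℂ) (n : ℕ) : pmhs a n [] = 1 := rfl

lemma pmhs_cons (a : ℂ) (n k : ℕ) (x : ℂ) (rest : List (ℕ × ℂ)) :
    pmhs a n ((k, x) :: rest) = ∑ m ∈ Finset.Icc 1 n, term a k x m * pmhs a (m - 1) rest := by
  simp [pmhs, term]

lemma pmhss_nil (a : ℂ) (n : ℕ) : pmhss a n [] = 1 := rfl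

lemma pmhss_cons (a : ℂ) (n k : ℕ) (x : ℂ) (rest : List (ℕ × ℂ)) :
    pmhss a n ((k, x) :: rest) = ∑ m ∈ Finset.Icc 1 n, term a k x m * pmhss a m rest := by
  simp [pmhss, term]

/-- strict chain `b ≥ p₁ > p₂ > ... > pₛ > t`, outermost first -/
noncomputable def pmhsB (a : ℂ) (t : ℕ) : ℕ → List (ℕ × ℂ) → ℂ
  | _, [] => 1
  | b, (k, x) :: T => ∑ m ∈ Finset.Icc (t+1) b, term a k x m * pmhsB a t (m-1) T

/-- strict chain `l ≥ pₛ > ... > p₁ > t`, innermost first -/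
noncomputable def pmhsI (a : ℂ) (l : ℕ) : ℕ → List (ℕ × ℂ) → ℂ
  | _, [] => 1
  | t, (k, x) :: S => ∑ m ∈ Finset.Icc (t+1) l, term a k x m * pmhsI a l m S

noncomputable def DD (a : ℂ) (l : ℕ) (Q : List (ℕ × ℂ)) : ℕ → List (ℕ × ℂ) → ℂ
  | t, [] => pmhsI a l t Q
  | b, (k, x) :: P => ∑ m ∈ Finset.Icc 1 b, term a k x m * DD a l Q m P

lemma pmhsB_cons (a : ℂ) (t b k : ℕ) (x : ℂ) (T : List (ℕ × ℂ)) :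
    pmhsB a t b ((k, x) :: T) = ∑ m ∈ Finset.Icc (t+1) b, term a k x m * pmhsB a t (m-1) T := by
  simp [pmhsB]

lemma pmhsI_cons (a : ℂ) (l t k : ℕ) (x : ℂ) (S : List (ℕ × ℂ)) :
    pmhsI a l t ((k, x) :: S) = ∑ m ∈ Finset.Icc (t+1) l, term a k x m * pmhsI a l m S := by
  simp [pmhsI]

lemma DD_cons (a : ℂ) (l : ℕ) (Q : List (ℕ × ℂ)) (b k : ℕ) (x : ℂ) (P : List (ℕ × ℂ)) :
    DD a l Q b ((k, x) :: P) = ∑ m ∈ Finset.Icc 1 b, term a k x m * DD a l Q m P := by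
  simp [DD]

lemma DD_nilP (a : ℂ) (l : ℕ) (Q : List (ℕ × ℂ)) (t : ℕ) : DD a l Q t [] = pmhsI a l t Q := rfl

lemma pmhs_eq_pmhsB (a : ℂ) : ∀ (T : List (ℕ × ℂ)) (b : ℕ), pmhs a b T = pmhsB a 0 b T := by
  intro T
  induction T with
  | nil => intro b; rfl
  | cons hd tl ih =>
    intro b
    obtain ⟨k, x⟩ := hd
    rw [pmhs_cons, pmhsB_cons]
    exact Finset.sum_congr rfl fun m _ => by rw [ih]

lemma pmhsB_append (a : ℂ) : ∀ (T : List (ℕ × ℂ)) (t b : ℕ) (k : ℕ) (x : ℂ),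
    pmhsB a t b (T ++ [(k, x)]) = ∑ m ∈ Finset.Icc (t+1) b, term a k x m * pmhsB a m b T := by
  intro T
  induction T with
  | nil =>
    intro t b k x
    simp only [List.nil_append, pmhsB_cons]
    exact Finset.sum_congr rfl fun m _ => rfl
  | cons hd tl ih =>
    intro t b k x
    obtain ⟨k', x'⟩ := hd
    rw [List.cons_append, pmhsB_cons]
    calc ∑ p ∈ Finset.Icc (t+1) b, term a k' x' p * pmhsB a t (p-1) (tl ++ [(k, x)])
        = ∑ p ∈ Finset.Icc (t+1) b, ∑ m ∈ Finset.Icc (t+1) (p-1),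
            term a k' x' p * (term a k x m * pmhsB a m (p-1) tl) := by
          refine Finset.sum_congr rfl fun p _ => ?_
          rw [ih, Finset.mul_sum]
      _ = ∑ m ∈ Finset.Icc (t+1) b, ∑ p ∈ Finset.Icc (m+1) b,
            term a k' x' p * (term a k x m * pmhsB a m (p-1) tl) := by
          refine Finset.sum_comm' ?_
          intro p m
          simp only [Finset.mem_Icc]
          omega
      _ = ∑ m ∈ Finset.Icc (t+1) b, term a k x m * pmhsB a m b ((k', x') :: tl) := by
          refine Finset.sum_congr rfl fun m _ => ?_
          rw [pmhsB_cons, Finset.mul_sum]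
          exact Finset.sum_congr rfl fun p _ => by ring

lemma pmhsI_eq_pmhsB (a : ℂ) (l : ℕ) : ∀ (S : List (ℕ × ℂ)) (t : ℕ),
    pmhsI a l t S = pmhsB a t l S.reverse := by
  intro S
  induction S with
  | nil => intro t; rfl
  | cons hd tl ih =>
    intro t
    obtain ⟨k, x⟩ := hd
    rw [List.reverse_cons, pmhsB_append, pmhsI_cons]
    exact Finset.sum_congr rfl fun m _ => by rw [ih]

lemma pmhs_reverse (a : ℂ) (l : ℕ) (S : List (ℕ × ℂ)) :
    pmhs a l S.reverse = pmhsI a l 0 S := by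
  rw [pmhs_eq_pmhsB, pmhsI_eq_pmhsB]

lemma DD_nil (a : ℂ) (l : ℕ) : ∀ (P : List (ℕ × ℂ)) (b : ℕ), DD a l [] b P = pmhss a b P := by
  intro P
  induction P with
  | nil => intro b; rfl
  | cons hd tl ih =>
    intro b
    obtain ⟨k, x⟩ := hd
    rw [DD_cons, pmhss_cons]
    exact Finset.sum_congr rfl fun m _ => by rw [ih]

lemma pmhsI_self (a : ℂ) (l : ℕ) (k : ℕ) (x : ℂ) (S : List (ℕ × ℂ)) :
    pmhsI a l l ((k, x) :: S) = 0 := by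
  rw [pmhsI_cons, Finset.Icc_eq_empty (by omega : ¬ l + 1 ≤ l), Finset.sum_empty]

lemma claim (a : ℂ) (l : ℕ) : ∀ (P : List (ℕ × ℂ)) (b : ℕ), b ≤ l →
    ∀ (k : ℕ) (x : ℂ) (Q : List (ℕ × ℂ)),
    pmhss a b P * pmhsI a l 0 ((k, x) :: Q) =
      DD a l ((k, x) :: Q) b P + DD a l Q b (P ++ [(k, x)]) := by
  intro P
  induction P with
  | nil =>
    intro b hb k x Q
    rw [pmhss_nil, one_mul, List.nil_append, DD_nilP, DD_cons, pmhsI_cons, pmhsI_cons]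
    have h0 : ∀ m ∈ Finset.Icc 1 b, term a k x m * DD a l Q m ([] : List (ℕ × ℂ))
        = term a k x m * pmhsI a l m Q := fun m _ => rfl
    rw [Finset.sum_congr rfl h0]
    rw [Finset.Icc_add_one_left_eq_Ioc, Finset.Icc_add_one_left_eq_Ioc,
      (show Finset.Icc 1 b = Finset.Ioc 0 b by exact Finset.Icc_add_one_left_eq_Ioc ..)]
    rw [add_comm, Finset.sum_Ioc_consecutive _ (Nat.zero_le b) hb]
  | cons hd tl ih =>
    intro b hb k x Q
    obtain ⟨k', x'⟩ := hd
    rw [List.cons_append, pmhss_cons, DD_cons, DD_cons, Finset.sum_mul, ← Finset.sum_add_distrib]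
    refine Finset.sum_congr rfl fun m hm => ?_
    rw [Finset.mem_Icc] at hm
    rw [mul_assoc, ih m (le_trans hm.2 hb) k x Q, mul_add]

lemma lemA (a : ℂ) (l : ℕ) (M : List (ℕ × ℂ)) (hM : M ≠ []) :
    ∑ j ∈ Finset.range (M.length + 1),
      (-1 : ℂ) ^ j * pmhss a l (M.take j) * pmhs a l ((M.drop j).reverse) = 0 := by
  set r := M.length with hr
  set g : ℕ → ℂ := fun j => DD a l (M.drop j) l (M.take j) with hg
  have hTj : ∀ j < r, pmhss a l (M.take j) * pmhs a l ((M.drop j).reverse) = g j + g (j+1) := by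
    intro j hj
    have hdrop : M.drop j = M[j] :: M.drop (j+1) := List.drop_eq_getElem_cons hj
    have htake : M.take (j+1) = M.take j ++ [M[j]] := by
      have := List.take_concat_get hj
      simpa using this.symm
    rcases e : M[j] with ⟨k, x⟩
    rw [pmhs_reverse, hg]
    simp only
    rw [hdrop, htake, e]
    exact claim a l (M.take j) l le_rfl k x (M.drop (j+1))
  have hTr : pmhss a l (M.take r) * pmhs a l ((M.drop r).reverse) = g r := by
    rw [hg]
    simp only
    rw [List.drop_length, DD_nil]
    simp [pmhs]
  have hg0 : g 0 = 0 := by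
    rw [hg]
    obtain ⟨⟨k, x⟩, M', rfl⟩ : ∃ hd tl, M = hd :: tl := by
      cases M with
      | nil => exact absurd rfl hM
      | cons hd tl => exact ⟨hd, tl, rfl⟩
    simp only [List.take_zero, List.drop_zero, DD_nilP]
    exact pmhsI_self a l k x M'
  calc ∑ j ∈ Finset.range (r + 1),
        (-1 : ℂ) ^ j * pmhss a l (M.take j) * pmhs a l ((M.drop j).reverse)
      = ∑ j ∈ Finset.range (r + 1), (-1 : ℂ) ^ j * g j
        + ∑ j ∈ Finset.range r, (-1 : ℂ) ^ j * g (j+1) := by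
        rw [Finset.sum_range_succ, Finset.sum_range_succ (fun j => (-1 : ℂ) ^ j * g j)]
        have h1 : ∑ j ∈ Finset.range r,
            (-1 : ℂ) ^ j * pmhss a l (M.take j) * pmhs a l ((M.drop j).reverse)
            = ∑ j ∈ Finset.range r, ((-1 : ℂ) ^ j * g j + (-1 : ℂ) ^ j * g (j+1)) := by
          refine Finset.sum_congr rfl fun j hj => ?_
          rw [Finset.mem_range] at hj
          rw [mul_assoc, hTj j hj, mul_add]
        rw [h1, Finset.sum_add_distrib, mul_assoc, hTr]
        ring
    _ = g 0 := by
        rw [Finset.sum_range_succ' (fun j => (-1 : ℂ) ^ j * g j)]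
        have hcomb : ∑ j ∈ Finset.range r, (-1 : ℂ) ^ (j+1) * g (j+1)
            + ∑ j ∈ Finset.range r, (-1 : ℂ) ^ j * g (j+1) = 0 := by
          rw [← Finset.sum_add_distrib]
          refine Finset.sum_eq_zero fun j _ => ?_
          ring
        rw [pow_zero, one_mul]
        linear_combination hcomb
    _ = 0 := hg0

lemma shift (a : ℂ) (k : ℕ) (x : ℂ) (P : List (ℕ × ℂ)) (n l : ℕ) :
    ∑ m ∈ Finset.Icc 1 n, term a k x (m + l) * pmhss a (m + l) P
      = pmhss a (n + l) ((k, x) :: P) - pmhss a l ((k, x) :: P) := by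
  rw [pmhss_cons, pmhss_cons]
  have h1 : ∑ m ∈ Finset.Icc 1 n, term a k x (m + l) * pmhss a (m + l) P
      = ∑ m ∈ Finset.Icc (l + 1) (l + n), term a k x m * pmhss a m P := by
    conv_rhs => rw [← Finset.map_add_left_Icc 1 n l]
    rw [Finset.sum_map]
    refine Finset.sum_congr rfl fun m _ => ?_
    rw [show (addLeftEmbedding l m : ℕ) = m + l from by
      simp [addLeftEmbedding]; omega]
  have h2 : (∑ m ∈ Finset.Icc 1 l, term a k x m * pmhss a m P)
      + (∑ m ∈ Finset.Icc (l + 1) (l + n), term a k x m * pmhss a m P)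
      = ∑ m ∈ Finset.Icc 1 (l + n), term a k x m * pmhss a m P := by
    rw [(show Finset.Icc 1 l = Finset.Ioc 0 l by exact Finset.Icc_add_one_left_eq_Ioc ..),
      Finset.Icc_add_one_left_eq_Ioc,
      (show Finset.Icc 1 (l + n) = Finset.Ioc 0 (l + n) by exact Finset.Icc_add_one_left_eq_Ioc ..)]
    exact Finset.sum_Ioc_consecutive _ (Nat.zero_le l) (by omega)
  rw [h1, show n + l = l + n from Nat.add_comm n l]
  linear_combination h2

lemma pull (s : Finset ℕ) (C v : ℂ) (f : ℕ → ℂ) :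
    ∑ m ∈ s, C * (f m * v) = C * (∑ m ∈ s, f m) * v := by
  simp only [Finset.mul_sum, Finset.sum_mul]
  exact Finset.sum_congr rfl fun m _ => by ring

lemma main (a : ℂ) : ∀ (L : List (ℕ × ℂ)) (l n : ℕ),
    pmhss ((l : ℂ) + a) n L =
      (-1 : ℂ) ^ L.length * ∑ j ∈ Finset.range (L.length + 1),
        (-1 : ℂ) ^ j * pmhss a (n + l) (L.take j) * pmhs a l ((L.drop j).reverse) := by
  intro L
  induction L with
  | nil =>
    intro l n
    simp [pmhss, pmhs]
  | cons hd rest ih =>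
    intro l n
    obtain ⟨k, x⟩ := hd
    simp only [List.length_cons]
    have hterm : ∀ m : ℕ, term ((l : ℂ) + a) k x m = term a k x (m + l) := by
      intro m
      unfold term
      push_cast
      ring_nf
    have lhs_eq : pmhss ((l : ℂ) + a) n ((k, x) :: rest)
        = (-1 : ℂ) ^ rest.length * ∑ j ∈ Finset.range (rest.length + 1), (-1 : ℂ) ^ j *
            (pmhss a (n + l) ((k, x) :: rest.take j) - pmhss a l ((k, x) :: rest.take j)) *
            pmhs a l ((rest.drop j).reverse) := by
      rw [pmhss_cons]
      have step : ∀ m ∈ Finset.Icc 1 n,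
          term ((l : ℂ) + a) k x m * pmhss ((l : ℂ) + a) m rest
          = ∑ j ∈ Finset.range (rest.length + 1),
              ((-1 : ℂ) ^ rest.length * (-1 : ℂ) ^ j) *
              ((term a k x (m + l) * pmhss a (m + l) (rest.take j)) *
                pmhs a l ((rest.drop j).reverse)) := by
        intro m _
        rw [ih l m, hterm, Finset.mul_sum, Finset.mul_sum]
        exact Finset.sum_congr rfl fun j _ => by ring
      rw [Finset.sum_congr rfl step, Finset.sum_comm, Finset.mul_sum]
      refine Finset.sum_congr rfl fun j _ => ?_
      rw [pull (Finset.Icc 1 n) ((-1 : ℂ) ^ rest.length * (-1 : ℂ) ^ j)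
        (pmhs a l ((rest.drop j).reverse))
        (fun m => term a k x (m + l) * pmhss a (m + l) (rest.take j)), shift]
      ring
    have hA' : ∑ j ∈ Finset.range (rest.length + 1), (-1 : ℂ) ^ j *
          pmhss a l ((k, x) :: rest.take j) * pmhs a l ((rest.drop j).reverse)
        = pmhs a l (((k, x) :: rest).reverse) := by
      have hA := lemA a l ((k, x) :: rest) (by simp)
      rw [List.length_cons] at hA
      rw [Finset.sum_range_succ' (fun j => (-1 : ℂ) ^ j *
        pmhss a l (((k, x) :: rest).take j) * pmhs a l ((((k, x) :: rest).drop j).reverse))] at hA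
      simp only [List.take_succ_cons, List.drop_succ_cons, List.take_zero, List.drop_zero,
        pmhss_nil, pow_zero, one_mul, mul_one] at hA
      have hneg : ∑ j ∈ Finset.range (rest.length + 1), (-1 : ℂ) ^ (j+1) *
            pmhss a l ((k, x) :: rest.take j) * pmhs a l ((rest.drop j).reverse)
          = - ∑ j ∈ Finset.range (rest.length + 1), (-1 : ℂ) ^ j *
            pmhss a l ((k, x) :: rest.take j) * pmhs a l ((rest.drop j).reverse) := by
        rw [← Finset.sum_neg_distrib]
        exact Finset.sum_congr rfl fun j _ => by ring
      rw [hneg] at hA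
      linear_combination -hA
    have hRHS : ∑ j ∈ Finset.range (rest.length + 1 + 1), (-1 : ℂ) ^ j *
          pmhss a (n + l) (((k, x) :: rest).take j) *
          pmhs a l ((((k, x) :: rest).drop j).reverse)
        = pmhs a l (((k, x) :: rest).reverse)
          - ∑ j ∈ Finset.range (rest.length + 1), (-1 : ℂ) ^ j *
            pmhss a (n + l) ((k, x) :: rest.take j) * pmhs a l ((rest.drop j).reverse) := by
      rw [Finset.sum_range_succ' (fun j => (-1 : ℂ) ^ j *
        pmhss a (n + l) (((k, x) :: rest).take j) * pmhs a l ((((k, x) :: rest).drop j).reverse))]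
      simp only [List.take_succ_cons, List.drop_succ_cons, List.take_zero, List.drop_zero,
        pmhss_nil, pow_zero, one_mul, mul_one]
      have hneg : ∑ j ∈ Finset.range (rest.length + 1), (-1 : ℂ) ^ (j+1) *
            pmhss a (n + l) ((k, x) :: rest.take j) * pmhs a l ((rest.drop j).reverse)
          = - ∑ j ∈ Finset.range (rest.length + 1), (-1 : ℂ) ^ j *
            pmhss a (n + l) ((k, x) :: rest.take j) * pmhs a l ((rest.drop j).reverse) := by
        rw [← Finset.sum_neg_distrib]
        exact Finset.sum_congr rfl fun j _ => by ring
      rw [hneg]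
      ring
    rw [lhs_eq, hRHS]
    have hsplit : ∑ j ∈ Finset.range (rest.length + 1), (-1 : ℂ) ^ j *
          (pmhss a (n + l) ((k, x) :: rest.take j) - pmhss a l ((k, x) :: rest.take j)) *
          pmhs a l ((rest.drop j).reverse)
        = (∑ j ∈ Finset.range (rest.length + 1), (-1 : ℂ) ^ j *
            pmhss a (n + l) ((k, x) :: rest.take j) * pmhs a l ((rest.drop j).reverse))
          - ∑ j ∈ Finset.range (rest.length + 1), (-1 : ℂ) ^ j *
            pmhss a l ((k, x) :: rest.take j) * pmhs a l ((rest.drop j).reverse) := by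
      rw [← Finset.sum_sub_distrib]
      exact Finset.sum_congr rfl fun j _ => by ring
    rw [hsplit]
    linear_combination (-(-1 : ℂ) ^ rest.length) * hA'

lemma take_zip {α β : Type*} : ∀ (l : List α) (l' : List β) (n : ℕ),
    (l.zip l').take n = (l.take n).zip (l'.take n) := by
  intro l
  induction l with
  | nil => intro l' n; simp
  | cons a l ih =>
    intro l' n
    cases l' with
    | nil => simp
    | cons b l' =>
      cases n with
      | zero => simp
      | succ n => simp [ih]

lemma drop_zip {α β : Type*} : ∀ (l : List α) (l' : List β) (n : ℕ),
    (l.zip l').drop n = (l.drop n).zip (l'.drop n) := by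
  intro l
  induction l with
  | nil => intro l' n; simp
  | cons a l ih =>
    intro l' n
    cases l' with
    | nil => simp
    | cons b l' =>
      cases n with
      | zero => simp
      | succ n => simp [ih]

end Stmt5Aux

/-- The shifted parametric star sum
`Σ_{n ≥ n_1 ≥ ... ≥ n_r > 0} Π x_j^{n_j+l+a}/(n_j+l+a)^{k_j}` is `pmhss (l+a) n`. -/
theorem stmt5 (a : ℝ) (ha : 0 ≤ a) (ks : List ℕ) (xs : List ℂ)
    (hlen : ks.length = xs.length) (hk : ∀ k ∈ ks, 1 ≤ k)
    (hx : ∀ x ∈ xs, ‖x‖ ≤ 1) (l : ℕ) (n : ℕ) (hn : 1 ≤ n) :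
    pmhss ((l : ℂ) + (a : ℂ)) n (ks.zip xs) =
      (-1 : ℂ) ^ ks.length * ∑ j ∈ Finset.range (ks.length + 1),
        (-1 : ℂ) ^ j * pmhss (a : ℂ) (n + l) ((ks.take j).zip (xs.take j)) *
          pmhs (a : ℂ) l (((ks.drop j).zip (xs.drop j)).reverse) := by
  have h := Stmt5Aux.main (a : ℂ) (ks.zip xs) l n
  rw [List.length_zip, hlen, min_self, ← hlen] at h
  rw [h]
  simp only [Stmt5Aux.take_zip, Stmt5Aux.drop_zip]
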